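/- Let P = (P,+,‾,˜,0,1) be a good monotonous pseudoeffect algebra with induced order ≤. Define x⊙y := (x̄+ȳ)˜ (defined if and only if x̃ ≤ y), x→y := x̄ + L(x,y), and x⇝y := L(x,y) + x̃. Then (P,≤,⊙,→,⇝,‾,˜,0,1) is a divisible unsharp residuated poset. -/

import Mathlib

namespace Paper

variable {E : Type*}

/-- The lower cone `L(S)` of a subset w.r.t. an order relation. -/
def lcone (le : E → E → Prop) (S : Set E) : Set E := {x | ∀ y ∈ S, le x y}

/-- The upper cone `U(S)` of a subset w.r.t. an order relation. -/
def ucone (le : E → E → Prop) (S : Set E) : Set E := {x | ∀ y ∈ S, le y x}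

/-- `S ≤ T` for subsets: every element of `S` is below every element of `T`. -/
def setLE (le : E → E → Prop) (S T : Set E) : Prop := ∀ x ∈ S, ∀ y ∈ T, le x y

/-- Effect algebra axioms (E1)-(E4); the partial operation `+` is encoded via `Option`
(`add x y = some z` means `x + y` is defined with value `z`). -/
structure IsEffectAlgebra (add : E → E → Option E) (compl : E → E)
    (zero one : E) : Prop where
  /-- (E1) -/
  comm : ∀ x y, add x y = add y x
  /-- (E2) -/
  assoc : ∀ x y z, (add x y).bind (fun u => add u z) = (add y z).bind (fun v => add x v)
  /-- (E3): `x'` is the unique `u` with `x + u = 1`. -/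
  compl_iff : ∀ x u, add x u = some one ↔ u = compl x
  /-- (E4) -/
  one_add : ∀ x y, add one x = some y → x = zero

/-- The induced order: `x ≤ y` iff there is `z` with `x + z = y`. -/
def eaLe (add : E → E → Option E) (x y : E) : Prop := ∃ z, add x z = some y

/-- `x + A := {x + a : a ∈ A}`. -/
def addLSet (add : E → E → Option E) (x : E) (S : Set E) : Set E :=
  {z | ∃ a ∈ S, add x a = some z}

/-- `A + x := {a + x : a ∈ A}`. -/
def addRSet (add : E → E → Option E) (S : Set E) (x : E) : Set E :=
  {z | ∃ a ∈ S, add a x = some z}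

/-- A monotonous effect algebra: for every `x` and nonempty `A`, `B`, if `A ∪ B ≤ x'`
and `L(A) ≤ U(B)`, then `L(x + A) ≤ U(x + B)`. -/
def Monotonous (add : E → E → Option E) (compl : E → E) : Prop :=
  ∀ (x : E) (A B : Set E), A.Nonempty → B.Nonempty →
    (∀ a ∈ A ∪ B, eaLe add a (compl x)) →
    setLE (eaLe add) (lcone (eaLe add) A) (ucone (eaLe add) B) →
    setLE (eaLe add) (lcone (eaLe add) (addLSet add x A)) (ucone (eaLe add) (addLSet add x B))

/-- The multiplication `x ⊙ y := (x' + y')'` derived from an effect algebra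
(defined iff `x' + y'` is, i.e. iff `x' ≤ y`). -/
def eaOdot (add : E → E → Option E) (compl : E → E) (x y : E) : Option E :=
  (add (compl x) (compl y)).map compl

/-- The implication `x → y := x' + L(x,y)` derived from an effect algebra. -/
def eaImp (add : E → E → Option E) (compl : E → E) (x y : E) : Set E :=
  addLSet add (compl x) (lcone (eaLe add) {x, y})

/-- `S ⊙ y := {s ⊙ y : s ∈ S}`. -/
def odotLSet (odot : E → E → Option E) (S : Set E) (y : E) : Set E :=
  {w | ∃ s ∈ S, odot s y = some w}

/-- `y ⊙ S := {y ⊙ s : s ∈ S}`. -/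
def odotRSet (odot : E → E → Option E) (y : E) (S : Set E) : Set E :=
  {w | ∃ s ∈ S, odot y s = some w}

/-- Commutative unsharp residuated poset, axioms (C1)-(C4); `⊙` is a partial
operation encoded via `Option` and `→` maps pairs to subsets. -/
structure IsCURP (le : E → E → Prop) (odot : E → E → Option E) (imp : E → E → Set E)
    (compl : E → E) (zero one : E) : Prop where
  /-- (C1): bounded poset … -/
  le_refl : ∀ x, le x x
  le_antisymm : ∀ x y, le x y → le y x → x = y
  le_trans : ∀ x y z, le x y → le y z → le x z
  zero_le : ∀ x, le zero x
  le_one : ∀ x, le x one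
  /-- (C1): … with an antitone involution. -/
  compl_compl : ∀ x, compl (compl x) = x
  compl_antitone : ∀ x y, le x y → le (compl y) (compl x)
  /-- (C2): `x ⊙ y` is defined iff `x' ≤ y`. -/
  odot_defined : ∀ x y, (odot x y).isSome ↔ le (compl x) y
  /-- (C2): partial commutative monoid. -/
  odot_comm : ∀ x y, odot x y = odot y x
  odot_assoc : ∀ x y z, (odot x y).bind (fun u => odot u z) = (odot y z).bind (fun v => odot x v)
  odot_one : ∀ x, odot x one = some x
  one_odot : ∀ x, odot one x = some x
  /-- (C2): `z' ≤ x ≤ y` implies `x ⊙ z ≤ y ⊙ z`. -/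
  odot_mono : ∀ x y z a b, le (compl z) x → le x y →
    odot x z = some a → odot y z = some b → le a b
  /-- (C3): unsharp adjointness. -/
  adjoint : ∀ x y z,
    setLE le (lcone le (odotLSet odot (ucone le {x, compl y}) y))
      (ucone le (lcone le {y, z})) ↔
    setLE le (lcone le (ucone le {x, compl y})) (ucone le (imp y z))
  /-- (C4) -/
  imp_zero : ∀ x, imp x zero = {compl x}

/-- Divisibility: `x ≤ y` implies `y ⊙ (y → x) = L(x)`. -/
def CURPDivisible (le : E → E → Prop) (odot : E → E → Option E)
    (imp : E → E → Set E) : Prop :=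
  ∀ x y, le x y → odotRSet odot y (imp y x) = lcone le {x}

/-- Pseudoeffect algebra axioms (P1)-(P4); `x̄ = lc x`, `x̃ = rc x`. -/
structure IsPEA (add : E → E → Option E) (lc rc : E → E) (zero one : E) : Prop where
  /-- (P1): if `x + y` is defined then `u + x = x + y` for some `u` … -/
  exists_left : ∀ x y z, add x y = some z → ∃ u, add u x = some z
  /-- (P1): … and `y + w = x + y` for some `w`. -/
  exists_right : ∀ x y z, add x y = some z → ∃ w, add y w = some z
  /-- (P2) -/
  assoc : ∀ x y z, (add x y).bind (fun u => add u z) = (add y z).bind (fun v => add x v)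
  /-- (P3): `x̄` is the unique `u` with `u + x = 1`. -/
  lc_iff : ∀ x u, add u x = some one ↔ u = lc x
  /-- (P3): `x̃` is the unique `w` with `x + w = 1`. -/
  rc_iff : ∀ x w, add x w = some one ↔ w = rc x
  /-- (P4) -/
  one_add : ∀ x y, add one x = some y → x = zero
  add_one : ∀ x y, add x one = some y → x = zero

/-- A pseudoeffect algebra is good if `(x̄ + ȳ)˜ = (x̃ + ỹ)‾` whenever `x̃ ≤ y`. -/
def Good (add : E → E → Option E) (lc rc : E → E) : Prop :=
  ∀ x y, eaLe add (rc x) y →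
    (add (lc x) (lc y)).map rc = (add (rc x) (rc y)).map lc

/-- A monotonous pseudoeffect algebra. -/
def PEAMonotonous (add : E → E → Option E) (lc rc : E → E) : Prop :=
  (∀ (x : E) (A B : Set E), A.Nonempty → B.Nonempty →
    (∀ a ∈ A ∪ B, eaLe add a (lc x)) →
    setLE (eaLe add) (lcone (eaLe add) A) (ucone (eaLe add) B) →
    setLE (eaLe add) (lcone (eaLe add) (addRSet add A x))
      (ucone (eaLe add) (addRSet add B x))) ∧
  (∀ (x : E) (A B : Set E), A.Nonempty → B.Nonempty →
    (∀ a ∈ A ∪ B, eaLe add a (rc x)) →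
    setLE (eaLe add) (lcone (eaLe add) A) (ucone (eaLe add) B) →
    setLE (eaLe add) (lcone (eaLe add) (addLSet add x A))
      (ucone (eaLe add) (addLSet add x B)))

/-- The multiplication `x ⊙ y := (x̄ + ȳ)˜` derived from a pseudoeffect algebra. -/
def peaOdot (add : E → E → Option E) (lc rc : E → E) (x y : E) : Option E :=
  (add (lc x) (lc y)).map rc

/-- The implication `x → y := x̄ + L(x,y)` derived from a pseudoeffect algebra. -/
def peaImp (add : E → E → Option E) (lc : E → E) (x y : E) : Set E :=
  {z | ∃ c ∈ lcone (eaLe add) {x, y}, add (lc x) c = some z}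

/-- The implication `x ⇝ y := L(x,y) + x̃` derived from a pseudoeffect algebra. -/
def peaImpW (add : E → E → Option E) (rc : E → E) (x y : E) : Set E :=
  {z | ∃ c ∈ lcone (eaLe add) {x, y}, add c (rc x) = some z}

/-- Unsharp residuated poset, axioms (R1)-(R7); `x̄ = lc x`, `x̃ = rc x`. -/
structure IsURP (le : E → E → Prop) (odot : E → E → Option E)
    (imp impW : E → E → Set E) (lc rc : E → E) (zero one : E) : Prop where
  /-- (R1): bounded poset. -/
  le_refl : ∀ x, le x x
  le_antisymm : ∀ x y, le x y → le y x → x = y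
  le_trans : ∀ x y z, le x y → le y z → le x z
  zero_le : ∀ x, le zero x
  le_one : ∀ x, le x one
  /-- (R2) -/
  rc_lc : ∀ x, rc (lc x) = x
  lc_rc : ∀ x, lc (rc x) = x
  lc_antitone : ∀ x y, le x y → le (lc y) (lc x)
  rc_antitone : ∀ x y, le x y → le (rc y) (rc x)
  /-- (R3): `x ⊙ y` is defined iff `x̃ ≤ y`. -/
  odot_defined : ∀ x y, (odot x y).isSome ↔ le (rc x) y
  /-- (R3): partial monoid. -/
  odot_assoc : ∀ x y z, (odot x y).bind (fun u => odot u z) = (odot y z).bind (fun v => odot x v)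
  odot_one : ∀ x, odot x one = some x
  one_odot : ∀ x, odot one x = some x
  /-- (R3): `z̄ ≤ x ≤ y` implies `x ⊙ z ≤ y ⊙ z`. -/
  odot_rmono : ∀ x y z a b, le (lc z) x → le x y →
    odot x z = some a → odot y z = some b → le a b
  /-- (R3): `z̃ ≤ x ≤ y` implies `z ⊙ x ≤ z ⊙ y`. -/
  odot_lmono : ∀ x y z a b, le (rc z) x → le x y →
    odot z x = some a → odot z y = some b → le a b
  /-- (R4) -/
  adjoint_r : ∀ x y z,
    setLE le (lcone le (odotLSet odot (ucone le {x, lc y}) y))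
      (ucone le (lcone le {y, z})) ↔
    setLE le (lcone le (ucone le {x, lc y})) (ucone le (imp y z))
  /-- (R5) -/
  adjoint_l : ∀ x y z,
    setLE le (lcone le (odotRSet odot y (ucone le {x, rc y})))
      (ucone le (lcone le {y, z})) ↔
    setLE le (lcone le (ucone le {x, rc y})) (ucone le (impW y z))
  /-- (R6) -/
  imp_zero : ∀ x, imp x zero = {lc x}
  impW_zero : ∀ x, impW x zero = {rc x}
  /-- (R7) -/
  compat : ∀ x y, (odot (lc x) (lc y)).map rc = (odot (rc x) (rc y)).map lc

section Aux

variable {add : E → E → Option E} {lc rc : E → E} {zero one : E}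

private lemma chain1 (hP : IsPEA add lc rc zero one) {x y z u w : E}
    (h1 : add x y = some u) (h2 : add u z = some w) :
    ∃ v, add y z = some v ∧ add x v = some w := by
  have h := hP.assoc x y z
  rw [h1] at h
  simp only [Option.bind_some] at h
  cases hv : add y z with
  | none => rw [hv] at h; simp only [Option.bind_none] at h; rw [h2] at h; simp at h
  | some v =>
      rw [hv] at h; simp only [Option.bind_some] at h
      exact ⟨v, rfl, by rw [← h, h2]⟩

private lemma chain2 (hP : IsPEA add lc rc zero one) {x y z v w : E}
    (h1 : add y z = some v) (h2 : add x v = some w) :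
    ∃ u, add x y = some u ∧ add u z = some w := by
  have h := hP.assoc x y z
  rw [h1] at h
  simp only [Option.bind_some] at h
  cases hu : add x y with
  | none => rw [hu] at h; simp only [Option.bind_none] at h; rw [h2] at h; simp at h
  | some u =>
      rw [hu] at h; simp only [Option.bind_some] at h
      exact ⟨u, rfl, by rw [h, h2]⟩

private lemma pea_lc_add (hP : IsPEA add lc rc zero one) (x : E) :
    add (lc x) x = some one := (hP.lc_iff x (lc x)).mpr rfl

private lemma pea_add_rc (hP : IsPEA add lc rc zero one) (x : E) :
    add x (rc x) = some one := (hP.rc_iff x (rc x)).mpr rfl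

private lemma pea_rc_lc (hP : IsPEA add lc rc zero one) (x : E) : rc (lc x) = x :=
  ((hP.rc_iff (lc x) x).mp (pea_lc_add hP x)).symm

private lemma pea_lc_rc (hP : IsPEA add lc rc zero one) (x : E) : lc (rc x) = x :=
  ((hP.lc_iff (rc x) x).mp (pea_add_rc hP x)).symm

private lemma pea_lc_one (hP : IsPEA add lc rc zero one) : lc one = zero :=
  hP.add_one _ _ (pea_lc_add hP one)

private lemma pea_rc_one (hP : IsPEA add lc rc zero one) : rc one = zero :=
  hP.one_add _ _ (pea_add_rc hP one)

private lemma pea_zero_add (hP : IsPEA add lc rc zero one) (x : E) :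
    add zero x = some x := by
  have h0 : add zero one = some one := by
    have := pea_lc_add hP one; rwa [pea_lc_one hP] at this
  obtain ⟨u, hu, h1⟩ := chain2 hP (pea_add_rc hP x) h0
  have : u = lc (rc x) := (hP.lc_iff (rc x) u).mp h1
  rw [pea_lc_rc hP] at this
  rwa [this] at hu

private lemma pea_add_zero (hP : IsPEA add lc rc zero one) (x : E) :
    add x zero = some x := by
  have h0 : add one zero = some one := by
    have := pea_add_rc hP one; rwa [pea_rc_one hP] at this
  obtain ⟨v, hv, h2⟩ := chain1 hP (pea_lc_add hP x) h0
  have : v = rc (lc x) := (hP.rc_iff (lc x) v).mp h2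
  rw [pea_rc_lc hP] at this
  rwa [this] at hv

private lemma ea_refl (hP : IsPEA add lc rc zero one) (x : E) : eaLe add x x :=
  ⟨zero, pea_add_zero hP x⟩

private lemma pea_zero_le (hP : IsPEA add lc rc zero one) (x : E) : eaLe add zero x :=
  ⟨x, pea_zero_add hP x⟩

private lemma pea_le_one (hP : IsPEA add lc rc zero one) (x : E) : eaLe add x one :=
  ⟨rc x, pea_add_rc hP x⟩

/-- right-form witness from the order -/
private lemma ea_le_left (hP : IsPEA add lc rc zero one) {x y : E} (h : eaLe add x y) :
    ∃ u, add u x = some y := by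
  obtain ⟨z, hz⟩ := h
  exact hP.exists_left x z y hz

/-- order from a right-form witness -/
private lemma ea_left_le (hP : IsPEA add lc rc zero one) {u x y : E} (h : add u x = some y) :
    eaLe add x y := hP.exists_right u x y h

private lemma ea_trans (hP : IsPEA add lc rc zero one) {x y z : E}
    (h1 : eaLe add x y) (h2 : eaLe add y z) : eaLe add x z := by
  obtain ⟨s, hs⟩ := h1
  obtain ⟨t, ht⟩ := h2
  obtain ⟨v, _, hv⟩ := chain1 hP hs ht
  exact ⟨v, hv⟩

private lemma ea_cancel_left (hP : IsPEA add lc rc zero one) {a b c d : E}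
    (h1 : add a b = some d) (h2 : add a c = some d) : b = c := by
  obtain ⟨u, hu, hub⟩ := chain2 hP h1 (pea_lc_add hP d)
  obtain ⟨u', hu', huc⟩ := chain2 hP h2 (pea_lc_add hP d)
  rw [hu] at hu'
  injection hu' with hu'
  rw [← hu'] at huc
  rw [(hP.rc_iff u b).mp hub, (hP.rc_iff u c).mp huc]

private lemma ea_cancel_right (hP : IsPEA add lc rc zero one) {a b c d : E}
    (h1 : add b a = some d) (h2 : add c a = some d) : b = c := by
  obtain ⟨v, hv, hbv⟩ := chain1 hP h1 (pea_add_rc hP d)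
  obtain ⟨v', hv', hcv⟩ := chain1 hP h2 (pea_add_rc hP d)
  rw [hv] at hv'
  injection hv' with hv'
  rw [← hv'] at hcv
  rw [(hP.lc_iff v b).mp hbv, (hP.lc_iff v c).mp hcv]

private lemma ea_antisymm (hP : IsPEA add lc rc zero one) {x y : E}
    (h1 : eaLe add x y) (h2 : eaLe add y x) : x = y := by
  obtain ⟨s, hs⟩ := h1
  obtain ⟨t, ht⟩ := h2
  obtain ⟨v, hv, hxv⟩ := chain1 hP hs ht
  have hv0 : v = zero := ea_cancel_left hP hxv (pea_add_zero hP x)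
  rw [hv0] at hv
  have h0 : add zero one = some one := by
    have := pea_lc_add hP one; rwa [pea_lc_one hP] at this
  obtain ⟨w, hw, _⟩ := chain1 hP hv h0
  have ht0 : t = zero := hP.add_one t w hw
  rw [ht0, pea_add_zero hP y] at ht
  exact (Option.some.inj ht).symm

private lemma pea_def_of_le_rc (hP : IsPEA add lc rc zero one) {x y : E}
    (h : eaLe add y (rc x)) : ∃ w, add x y = some w := by
  obtain ⟨t, ht⟩ := h
  obtain ⟨u, hu, _⟩ := chain2 hP ht (pea_add_rc hP x)
  exact ⟨u, hu⟩

private lemma pea_def_of_le_lc (hP : IsPEA add lc rc zero one) {x y : E}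
    (h : eaLe add x (lc y)) : ∃ w, add x y = some w := by
  obtain ⟨u, hu⟩ := ea_le_left hP h
  obtain ⟨v, hv, _⟩ := chain1 hP hu (pea_lc_add hP y)
  exact ⟨v, hv⟩

private lemma pea_le_rc_of_def (hP : IsPEA add lc rc zero one) {x y w : E}
    (h : add x y = some w) : eaLe add y (rc x) := by
  obtain ⟨v, hv, hxv⟩ := chain1 hP h (pea_add_rc hP w)
  have : v = rc x := (hP.rc_iff x v).mp hxv
  exact ⟨rc w, by rw [← this]; exact hv⟩

private lemma pea_le_lc_of_def (hP : IsPEA add lc rc zero one) {x y w : E}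
    (h : add x y = some w) : eaLe add x (lc y) := by
  obtain ⟨u, hu, huy⟩ := chain2 hP h (pea_lc_add hP w)
  have : u = lc y := (hP.lc_iff y u).mp huy
  exact ea_left_le hP (by rw [← this]; exact hu)

private lemma pea_lc_antitone (hP : IsPEA add lc rc zero one) {x y : E}
    (h : eaLe add x y) : eaLe add (lc y) (lc x) := by
  obtain ⟨u, hu⟩ := ea_le_left hP h
  obtain ⟨e, he, hex⟩ := chain2 hP hu (pea_lc_add hP y)
  have : e = lc x := (hP.lc_iff x e).mp hex
  exact ⟨u, by rw [← this]; exact he⟩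

private lemma pea_rc_antitone (hP : IsPEA add lc rc zero one) {x y : E}
    (h : eaLe add x y) : eaLe add (rc y) (rc x) := by
  obtain ⟨t, ht⟩ := h
  obtain ⟨v, hv, hxv⟩ := chain1 hP ht (pea_add_rc hP y)
  have : v = rc x := (hP.rc_iff x v).mp hxv
  exact ea_left_le hP (by rw [← this]; exact hv)

private lemma pea_add_le_add_left (hP : IsPEA add lc rc zero one) {x b c p q : E}
    (hbc : eaLe add b c) (hb : add x b = some p) (hc : add x c = some q) :
    eaLe add p q := by
  obtain ⟨t, ht⟩ := hbc
  obtain ⟨u, hu, h2⟩ := chain2 hP ht hc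
  rw [hb] at hu
  injection hu with hu
  rw [← hu] at h2
  exact ⟨t, h2⟩

private lemma pea_add_le_add_right (hP : IsPEA add lc rc zero one) {y b c p q : E}
    (hbc : eaLe add b c) (hb : add b y = some p) (hc : add c y = some q) :
    eaLe add p q := by
  obtain ⟨u, hu⟩ := ea_le_left hP hbc
  obtain ⟨v, hv, h2⟩ := chain1 hP hu hc
  rw [hb] at hv
  injection hv with hv
  rw [← hv] at h2
  exact ea_left_le hP h2

private lemma pea_le_cancel_left (hP : IsPEA add lc rc zero one) {x b c p q : E}
    (hb : add x b = some p) (hc : add x c = some q) (h : eaLe add p q) :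
    eaLe add b c := by
  obtain ⟨t, ht⟩ := h
  obtain ⟨v, hv, h2⟩ := chain1 hP hb ht
  have : v = c := ea_cancel_left hP h2 hc
  exact ⟨t, by rw [← this]; exact hv⟩

private lemma pea_le_cancel_right (hP : IsPEA add lc rc zero one) {y b c p q : E}
    (hb : add b y = some p) (hc : add c y = some q) (h : eaLe add p q) :
    eaLe add b c := by
  obtain ⟨u, hu⟩ := ea_le_left hP h
  obtain ⟨e, he, h2⟩ := chain2 hP hb hu
  have : e = c := ea_cancel_right hP h2 hc
  exact ea_left_le hP (by rw [← this]; exact he)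

/-- if `lc y + d = s` then `s ⊙ y = d`. -/
private lemma psi_odot (hP : IsPEA add lc rc zero one) {y d s : E}
    (hs : add (lc y) d = some s) : peaOdot add lc rc s y = some d := by
  obtain ⟨e, he, h2⟩ := chain2 hP hs (pea_lc_add hP s)
  have hd : d = rc e := (hP.rc_iff e d).mp h2
  rw [peaOdot, he, Option.map_some, ← hd]

/-- if `d + rc y = s` then `y ⊙ s = d`. -/
private lemma rho_odot (hP : IsPEA add lc rc zero one) {y d s : E}
    (hs : add d (rc y) = some s) : peaOdot add lc rc y s = some d := by
  obtain ⟨g, hg, h2⟩ := chain2 hP hs (pea_lc_add hP s)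
  have hgy : g = y := by
    have := (hP.lc_iff (rc y) g).mp h2
    rwa [pea_lc_rc hP] at this
  rw [hgy] at hg
  obtain ⟨e, he, h3⟩ := chain2 hP hg (pea_lc_add hP y)
  have hd : d = rc e := (hP.rc_iff e d).mp h3
  rw [peaOdot, he, Option.map_some, ← hd]

/-- goodness identity: if `lc y + d = s` then `rc s + rc y = rc d`. -/
private lemma good1 (hP : IsPEA add lc rc zero one) (hG : Good add lc rc) {y d s : E}
    (hs : add (lc y) d = some s) : add (rc s) (rc y) = some (rc d) := by
  have hly : eaLe add (lc y) s := ⟨d, hs⟩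
  have hpre : eaLe add (rc s) y := by
    have := pea_rc_antitone hP hly
    rwa [pea_rc_lc hP] at this
  have hg := hG s y hpre
  obtain ⟨e, he, h2⟩ := chain2 hP hs (pea_lc_add hP s)
  have he2 : e = lc d := (hP.lc_iff d e).mp h2
  rw [he, he2, Option.map_some, pea_rc_lc hP] at hg
  cases hf : add (rc s) (rc y) with
  | none => rw [hf] at hg; simp at hg
  | some f =>
      rw [hf, Option.map_some] at hg
      injection hg with hg
      have : rc (lc f) = rc d := by rw [hg]
      rw [pea_rc_lc hP] at this
      rw [this]

/-- goodness identity: if `d + rc y = s` then `lc y + lc s = lc d`. -/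
private lemma good2 (hP : IsPEA add lc rc zero one) (hG : Good add lc rc) {y d s : E}
    (hs : add d (rc y) = some s) : add (lc y) (lc s) = some (lc d) := by
  have hry : eaLe add (rc y) s := ea_left_le hP hs
  have hg := hG y s hry
  obtain ⟨f, hf, h2⟩ := chain1 hP hs (pea_add_rc hP s)
  have hf2 : f = rc d := (hP.rc_iff d f).mp h2
  rw [hf, hf2, Option.map_some, pea_lc_rc hP] at hg
  cases he : add (lc y) (lc s) with
  | none => rw [he] at hg; simp at hg
  | some e =>
      rw [he, Option.map_some] at hg
      injection hg with hg
      have : lc (rc e) = lc d := by rw [hg]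
      rw [pea_lc_rc hP] at this
      rw [this]

end Aux

section Main

variable {add : E → E → Option E} {lc rc : E → E} {zero one : E}

/-- key lemma: if `a` is below every upper bound of `B₀` lying below `y`,
then `a` is below every upper bound of `B₀`. -/
private lemma crux (hP : IsPEA add lc rc zero one) (hG : Good add lc rc)
    (hM1 : ∀ (x : E) (A B : Set E), A.Nonempty → B.Nonempty →
      (∀ a ∈ A ∪ B, eaLe add a (lc x)) →
      setLE (eaLe add) (lcone (eaLe add) A) (ucone (eaLe add) B) →
      setLE (eaLe add) (lcone (eaLe add) (addRSet add A x))
        (ucone (eaLe add) (addRSet add B x)))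
    {y a b : E} (B₀ : Set E) (hne : B₀.Nonempty)
    (hBy : ∀ b' ∈ B₀, eaLe add b' y)
    (ha : ∀ c, eaLe add c y → (∀ b' ∈ B₀, eaLe add b' c) → eaLe add a c)
    (hb : ∀ b' ∈ B₀, eaLe add b' b) :
    eaLe add a b := by
  have hψ : ∀ b', eaLe add b' y → ∃ s, add (lc y) b' = some s := by
    intro b' h
    exact pea_def_of_le_rc hP (by rw [pea_rc_lc hP]; exact h)
  set A : Set E := {w | ∃ b' ∈ B₀, ∃ s, add (lc y) b' = some s ∧ w = rc s} with hA
  set B : Set E := {w | ∃ c, eaLe add c y ∧ (∀ b' ∈ B₀, eaLe add b' c) ∧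
      ∃ s, add (lc y) c = some s ∧ w = rc s} with hB
  have hAne : A.Nonempty := by
    obtain ⟨b₀, hb₀⟩ := hne
    obtain ⟨s₀, hs₀⟩ := hψ b₀ (hBy _ hb₀)
    exact ⟨rc s₀, b₀, hb₀, s₀, hs₀, rfl⟩
  have hBne : B.Nonempty :=
    ⟨rc one, y, ea_refl hP y, hBy, one, pea_lc_add hP y, rfl⟩
  have hbound : ∀ α ∈ A ∪ B, eaLe add α (lc (rc y)) := by
    intro α hα
    rw [pea_lc_rc hP]
    rcases hα with h | h
    · obtain ⟨b', _, s, hs, rfl⟩ := h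
      have := pea_rc_antitone hP (⟨b', hs⟩ : eaLe add (lc y) s)
      rwa [pea_rc_lc hP] at this
    · obtain ⟨c, _, _, s, hs, rfl⟩ := h
      have := pea_rc_antitone hP (⟨c, hs⟩ : eaLe add (lc y) s)
      rwa [pea_rc_lc hP] at this
  have hhyp : setLE (eaLe add) (lcone (eaLe add) A) (ucone (eaLe add) B) := by
    intro ℓ hℓ t ht
    obtain ⟨b₀, hb₀⟩ := hne
    obtain ⟨s₀, hs₀⟩ := hψ b₀ (hBy _ hb₀)
    have h1 : eaLe add ℓ (rc s₀) := hℓ _ ⟨b₀, hb₀, s₀, hs₀, rfl⟩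
    have h2 : eaLe add s₀ (lc ℓ) := by
      have := pea_lc_antitone hP h1
      rwa [pea_lc_rc hP] at this
    have h3 : eaLe add (lc y) (lc ℓ) := ea_trans hP ⟨b₀, hs₀⟩ h2
    obtain ⟨d, hd⟩ := h3
    have hdy : eaLe add d y := by
      have := pea_le_rc_of_def hP hd
      rwa [pea_rc_lc hP] at this
    have hdU : ∀ b' ∈ B₀, eaLe add b' d := by
      intro b' hb'
      obtain ⟨s', hs'⟩ := hψ b' (hBy _ hb')
      have hb1 : eaLe add ℓ (rc s') := hℓ _ ⟨b', hb', s', hs', rfl⟩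
      have hb2 : eaLe add s' (lc ℓ) := by
        have := pea_lc_antitone hP hb1
        rwa [pea_lc_rc hP] at this
      exact pea_le_cancel_left hP hs' hd hb2
    exact ht ℓ ⟨d, hdy, hdU, lc ℓ, hd, (pea_rc_lc hP ℓ).symm⟩
  have hkey := hM1 (rc y) A B hAne hBne hbound hhyp
  have hmb : rc b ∈ lcone (eaLe add) (addRSet add A (rc y)) := by
    intro w hw
    obtain ⟨α, hα, hαw⟩ := hw
    obtain ⟨b', hb', s, hs, rfl⟩ := hα
    rw [good1 hP hG hs] at hαw
    injection hαw with hαw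
    rw [← hαw]
    exact pea_rc_antitone hP (hb b' hb')
  have hma : rc a ∈ ucone (eaLe add) (addRSet add B (rc y)) := by
    intro w hw
    obtain ⟨α, hα, hαw⟩ := hw
    obtain ⟨c, hcy, hcU, s, hs, rfl⟩ := hα
    rw [good1 hP hG hs] at hαw
    injection hαw with hαw
    rw [← hαw]
    exact pea_rc_antitone hP (ha c hcy hcU)
  have hfin : eaLe add (rc b) (rc a) := hkey _ hmb _ hma
  have := pea_lc_antitone hP hfin
  rwa [pea_lc_rc hP, pea_lc_rc hP] at this

/-- mirror key lemma. -/
private lemma cruxW (hP : IsPEA add lc rc zero one) (hG : Good add lc rc)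
    (hM2 : ∀ (x : E) (A B : Set E), A.Nonempty → B.Nonempty →
      (∀ a ∈ A ∪ B, eaLe add a (rc x)) →
      setLE (eaLe add) (lcone (eaLe add) A) (ucone (eaLe add) B) →
      setLE (eaLe add) (lcone (eaLe add) (addLSet add x A))
        (ucone (eaLe add) (addLSet add x B)))
    {y a b : E} (B₀ : Set E) (hne : B₀.Nonempty)
    (hBy : ∀ b' ∈ B₀, eaLe add b' y)
    (ha : ∀ c, eaLe add c y → (∀ b' ∈ B₀, eaLe add b' c) → eaLe add a c)
    (hb : ∀ b' ∈ B₀, eaLe add b' b) :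
    eaLe add a b := by
  have hρ : ∀ b', eaLe add b' y → ∃ s, add b' (rc y) = some s := by
    intro b' h
    exact pea_def_of_le_lc hP (by rw [pea_lc_rc hP]; exact h)
  set A : Set E := {w | ∃ b' ∈ B₀, ∃ s, add b' (rc y) = some s ∧ w = lc s} with hA
  set B : Set E := {w | ∃ c, eaLe add c y ∧ (∀ b' ∈ B₀, eaLe add b' c) ∧
      ∃ s, add c (rc y) = some s ∧ w = lc s} with hB
  have hAne : A.Nonempty := by
    obtain ⟨b₀, hb₀⟩ := hne
    obtain ⟨s₀, hs₀⟩ := hρ b₀ (hBy _ hb₀)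
    exact ⟨lc s₀, b₀, hb₀, s₀, hs₀, rfl⟩
  have hBne : B.Nonempty :=
    ⟨lc one, y, ea_refl hP y, hBy, one, pea_add_rc hP y, rfl⟩
  have hbound : ∀ α ∈ A ∪ B, eaLe add α (rc (lc y)) := by
    intro α hα
    rw [pea_rc_lc hP]
    rcases hα with h | h
    · obtain ⟨b', _, s, hs, rfl⟩ := h
      have := pea_lc_antitone hP (ea_left_le hP hs)
      rwa [pea_lc_rc hP] at this
    · obtain ⟨c, _, _, s, hs, rfl⟩ := h
      have := pea_lc_antitone hP (ea_left_le hP hs)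
      rwa [pea_lc_rc hP] at this
  have hhyp : setLE (eaLe add) (lcone (eaLe add) A) (ucone (eaLe add) B) := by
    intro ℓ hℓ t ht
    obtain ⟨b₀, hb₀⟩ := hne
    obtain ⟨s₀, hs₀⟩ := hρ b₀ (hBy _ hb₀)
    have h1 : eaLe add ℓ (lc s₀) := hℓ _ ⟨b₀, hb₀, s₀, hs₀, rfl⟩
    have h2 : eaLe add s₀ (rc ℓ) := by
      have := pea_rc_antitone hP h1
      rwa [pea_rc_lc hP] at this
    have h3 : eaLe add (rc y) (rc ℓ) := ea_trans hP (ea_left_le hP hs₀) h2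
    obtain ⟨p, hp⟩ := h3
    obtain ⟨d, hd⟩ := hP.exists_left (rc y) p (rc ℓ) hp
    have hdy : eaLe add d y := by
      have := pea_le_lc_of_def hP hd
      rwa [pea_lc_rc hP] at this
    have hdU : ∀ b' ∈ B₀, eaLe add b' d := by
      intro b' hb'
      obtain ⟨s', hs'⟩ := hρ b' (hBy _ hb')
      have hb1 : eaLe add ℓ (lc s') := hℓ _ ⟨b', hb', s', hs', rfl⟩
      have hb2 : eaLe add s' (rc ℓ) := by
        have := pea_rc_antitone hP hb1
        rwa [pea_rc_lc hP] at this
      exact pea_le_cancel_right hP hs' hd hb2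
    exact ht ℓ ⟨d, hdy, hdU, rc ℓ, hd, (pea_lc_rc hP ℓ).symm⟩
  have hkey := hM2 (lc y) A B hAne hBne hbound hhyp
  have hmb : lc b ∈ lcone (eaLe add) (addLSet add (lc y) A) := by
    intro w hw
    obtain ⟨α, hα, hαw⟩ := hw
    obtain ⟨b', hb', s, hs, rfl⟩ := hα
    rw [good2 hP hG hs] at hαw
    injection hαw with hαw
    rw [← hαw]
    exact pea_lc_antitone hP (hb b' hb')
  have hma : lc a ∈ ucone (eaLe add) (addLSet add (lc y) B) := by
    intro w hw
    obtain ⟨α, hα, hαw⟩ := hw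
    obtain ⟨c, hcy, hcU, s, hs, rfl⟩ := hα
    rw [good2 hP hG hs] at hαw
    injection hαw with hαw
    rw [← hαw]
    exact pea_lc_antitone hP (ha c hcy hcU)
  have hfin : eaLe add (lc b) (lc a) := hkey _ hmb _ hma
  have := pea_rc_antitone hP hfin
  rwa [pea_rc_lc hP, pea_rc_lc hP] at this

end Main

section Adj

variable {add : E → E → Option E} {lc rc : E → E} {zero one : E}

private lemma adjR (hP : IsPEA add lc rc zero one) (hG : Good add lc rc)
    (hM : PEAMonotonous add lc rc) (x y z : E) :
    setLE (eaLe add) (lcone (eaLe add)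
        (odotLSet (peaOdot add lc rc) (ucone (eaLe add) {x, lc y}) y))
      (ucone (eaLe add) (lcone (eaLe add) {y, z})) ↔
    setLE (eaLe add) (lcone (eaLe add) (ucone (eaLe add) {x, lc y}))
      (ucone (eaLe add) (peaImp add lc y z)) := by
  set S : Set E := ucone (eaLe add) {x, lc y} with hSdef
  set B₀ : Set E := lcone (eaLe add) {y, z} with hB₀def
  set T : Set E := odotLSet (peaOdot add lc rc) S y with hTdef
  have honeS : one ∈ S := fun u _ => pea_le_one hP u
  have hyT : y ∈ T := ⟨one, honeS, psi_odot hP (pea_lc_add hP y)⟩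
  have hTmem : ∀ d ∈ T, eaLe add d y ∧ ∃ s ∈ S, add (lc y) d = some s := by
    intro d hd
    obtain ⟨s, hsS, hso⟩ := hd
    have hlys : eaLe add (lc y) s := hsS (lc y) (Set.mem_insert_of_mem _ rfl)
    obtain ⟨d₁, hd₁⟩ := hlys
    have hps := psi_odot hP hd₁
    rw [hso] at hps
    injection hps with hps
    subst hps
    have hdy : eaLe add d y := by
      have := pea_le_rc_of_def hP hd₁
      rwa [pea_rc_lc hP] at this
    exact ⟨hdy, s, hsS, hd₁⟩
  have hB₀ne : B₀.Nonempty := ⟨zero, fun u _ => pea_zero_le hP u⟩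
  have hB₀y : ∀ b' ∈ B₀, eaLe add b' y := fun b' hb' => hb' y (Set.mem_insert _ _)
  constructor
  · intro hL
    have hbound : ∀ α ∈ T ∪ B₀, eaLe add α (rc (lc y)) := by
      intro α hα
      rw [pea_rc_lc hP]
      rcases hα with h | h
      · exact (hTmem α h).1
      · exact hB₀y α h
    have hkey := hM.2 (lc y) T B₀ ⟨y, hyT⟩ hB₀ne hbound hL
    intro ℓ hℓ t ht
    refine hkey ℓ ?_ t ?_
    · intro w hw
      obtain ⟨d, hdT, hdw⟩ := hw
      obtain ⟨_, s, hsS, hs⟩ := hTmem d hdT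
      rw [hs] at hdw
      injection hdw with hdw
      rw [← hdw]
      exact hℓ s hsS
    · intro w hw
      obtain ⟨c, hc, hcw⟩ := hw
      exact ht w ⟨c, hc, hcw⟩
  · intro hR a haT t ht
    have hay : eaLe add a y := haT y hyT
    obtain ⟨sa, hsa⟩ : ∃ s, add (lc y) a = some s :=
      pea_def_of_le_rc hP (by rw [pea_rc_lc hP]; exact hay)
    refine crux hP hG hM.1 B₀ hB₀ne hB₀y ?_ (fun b' hb' => ht b' hb')
    intro c hcy hcU
    obtain ⟨sc, hsc⟩ : ∃ s, add (lc y) c = some s :=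
      pea_def_of_le_rc hP (by rw [pea_rc_lc hP]; exact hcy)
    have hsaL : sa ∈ lcone (eaLe add) S := by
      intro s hsS
      have hlys : eaLe add (lc y) s := hsS (lc y) (Set.mem_insert_of_mem _ rfl)
      obtain ⟨d, hd⟩ := hlys
      have hdT : d ∈ T := ⟨s, hsS, psi_odot hP hd⟩
      exact pea_add_le_add_left hP (haT d hdT) hsa hd
    have hscU : sc ∈ ucone (eaLe add) (peaImp add lc y z) := by
      intro w hw
      obtain ⟨c', hc', hw'⟩ := hw
      exact pea_add_le_add_left hP (hcU c' hc') hw' hsc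
    exact pea_le_cancel_left hP hsa hsc (hR sa hsaL sc hscU)

private lemma adjL (hP : IsPEA add lc rc zero one) (hG : Good add lc rc)
    (hM : PEAMonotonous add lc rc) (x y z : E) :
    setLE (eaLe add) (lcone (eaLe add)
        (odotRSet (peaOdot add lc rc) y (ucone (eaLe add) {x, rc y})))
      (ucone (eaLe add) (lcone (eaLe add) {y, z})) ↔
    setLE (eaLe add) (lcone (eaLe add) (ucone (eaLe add) {x, rc y}))
      (ucone (eaLe add) (peaImpW add rc y z)) := by
  set S : Set E := ucone (eaLe add) {x, rc y} with hSdef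
  set B₀ : Set E := lcone (eaLe add) {y, z} with hB₀def
  set T : Set E := odotRSet (peaOdot add lc rc) y S with hTdef
  have honeS : one ∈ S := fun u _ => pea_le_one hP u
  have hyT : y ∈ T := ⟨one, honeS, rho_odot hP (pea_add_rc hP y)⟩
  have hTmem : ∀ d ∈ T, eaLe add d y ∧ ∃ s ∈ S, add d (rc y) = some s := by
    intro d hd
    obtain ⟨s, hsS, hso⟩ := hd
    have hrys : eaLe add (rc y) s := hsS (rc y) (Set.mem_insert_of_mem _ rfl)
    obtain ⟨p, hp⟩ := hrys
    obtain ⟨d₁, hd₁⟩ := hP.exists_left (rc y) p s hp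
    have hps := rho_odot hP hd₁
    rw [hso] at hps
    injection hps with hps
    subst hps
    have hdy : eaLe add d y := by
      have := pea_le_lc_of_def hP hd₁
      rwa [pea_lc_rc hP] at this
    exact ⟨hdy, s, hsS, hd₁⟩
  have hB₀ne : B₀.Nonempty := ⟨zero, fun u _ => pea_zero_le hP u⟩
  have hB₀y : ∀ b' ∈ B₀, eaLe add b' y := fun b' hb' => hb' y (Set.mem_insert _ _)
  constructor
  · intro hL
    have hbound : ∀ α ∈ T ∪ B₀, eaLe add α (lc (rc y)) := by
      intro α hα
      rw [pea_lc_rc hP]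
      rcases hα with h | h
      · exact (hTmem α h).1
      · exact hB₀y α h
    have hkey := hM.1 (rc y) T B₀ ⟨y, hyT⟩ hB₀ne hbound hL
    intro ℓ hℓ t ht
    refine hkey ℓ ?_ t ?_
    · intro w hw
      obtain ⟨d, hdT, hdw⟩ := hw
      obtain ⟨_, s, hsS, hs⟩ := hTmem d hdT
      rw [hs] at hdw
      injection hdw with hdw
      rw [← hdw]
      exact hℓ s hsS
    · intro w hw
      obtain ⟨c, hc, hcw⟩ := hw
      exact ht w ⟨c, hc, hcw⟩
  · intro hR a haT t ht
    have hay : eaLe add a y := haT y hyT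
    obtain ⟨sa, hsa⟩ : ∃ s, add a (rc y) = some s :=
      pea_def_of_le_lc hP (by rw [pea_lc_rc hP]; exact hay)
    refine cruxW hP hG hM.2 B₀ hB₀ne hB₀y ?_ (fun b' hb' => ht b' hb')
    intro c hcy hcU
    obtain ⟨sc, hsc⟩ : ∃ s, add c (rc y) = some s :=
      pea_def_of_le_lc hP (by rw [pea_lc_rc hP]; exact hcy)
    have hsaL : sa ∈ lcone (eaLe add) S := by
      intro s hsS
      have hrys : eaLe add (rc y) s := hsS (rc y) (Set.mem_insert_of_mem _ rfl)
      obtain ⟨p, hp⟩ := hrys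
      obtain ⟨d, hd⟩ := hP.exists_left (rc y) p s hp
      have hdT : d ∈ T := ⟨s, hsS, rho_odot hP hd⟩
      exact pea_add_le_add_right hP (haT d hdT) hsa hd
    have hscU : sc ∈ ucone (eaLe add) (peaImpW add rc y z) := by
      intro w hw
      obtain ⟨c', hc', hw'⟩ := hw
      exact pea_add_le_add_right hP (hcU c' hc') hw' hsc
    exact pea_le_cancel_right hP hsa hsc (hR sa hsaL sc hscU)

end Adj

section Small

variable {add : E → E → Option E} {lc rc : E → E} {zero one : E}

private lemma odotDefined (hP : IsPEA add lc rc zero one) (x y : E) :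
    (peaOdot add lc rc x y).isSome ↔ eaLe add (rc x) y := by
  constructor
  · intro h
    cases he : add (lc x) (lc y) with
    | none => rw [peaOdot, he] at h; simp at h
    | some e =>
        have h1 := pea_le_rc_of_def hP he
        rw [pea_rc_lc hP] at h1
        have h2 := pea_rc_antitone hP h1
        rwa [pea_rc_lc hP] at h2
  · intro h
    have h1 := pea_lc_antitone hP h
    rw [pea_lc_rc hP] at h1
    obtain ⟨w, hw⟩ := pea_def_of_le_rc hP (by rw [pea_rc_lc hP]; exact h1)
    rw [peaOdot, hw]
    simp

private lemma odotAssoc (hP : IsPEA add lc rc zero one) (x y z : E) :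
    (peaOdot add lc rc x y).bind (fun u => peaOdot add lc rc u z)
      = (peaOdot add lc rc y z).bind (fun v => peaOdot add lc rc x v) := by
  have h := hP.assoc (lc x) (lc y) (lc z)
  cases h1 : add (lc x) (lc y) with
  | none =>
      rw [h1] at h
      simp only [Option.bind_none] at h
      cases h2 : add (lc y) (lc z) with
      | none => simp [peaOdot, h1, h2]
      | some f =>
          rw [h2] at h
          simp only [Option.bind_some] at h
          simp only [peaOdot, h1, h2, Option.map_none, Option.map_some,
            Option.bind_none, Option.bind_some, pea_lc_rc hP]
          rw [← h]
          rfl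
  | some e =>
      rw [h1] at h
      simp only [Option.bind_some] at h
      cases h2 : add (lc y) (lc z) with
      | none =>
          rw [h2] at h
          simp only [Option.bind_none] at h
          simp only [peaOdot, h1, h2, Option.map_none, Option.map_some,
            Option.bind_none, Option.bind_some, pea_lc_rc hP, h]
      | some f =>
          rw [h2] at h
          simp only [Option.bind_some] at h
          simp only [peaOdot, h1, h2, Option.map_some, Option.bind_some,
            pea_lc_rc hP, h]

private lemma odotOne (hP : IsPEA add lc rc zero one) (x : E) :
    peaOdot add lc rc x one = some x := by
  rw [peaOdot, pea_lc_one hP, pea_add_zero hP, Option.map_some, pea_rc_lc hP]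

private lemma oneOdot (hP : IsPEA add lc rc zero one) (x : E) :
    peaOdot add lc rc one x = some x := by
  rw [peaOdot, pea_lc_one hP, pea_zero_add hP, Option.map_some, pea_rc_lc hP]

private lemma odotRmono (hP : IsPEA add lc rc zero one) (x y z a b : E)
    (_ : eaLe add (lc z) x) (hxy : eaLe add x y)
    (h3 : peaOdot add lc rc x z = some a) (h4 : peaOdot add lc rc y z = some b) :
    eaLe add a b := by
  rw [peaOdot] at h3 h4
  cases he : add (lc x) (lc z) with
  | none => rw [he] at h3; simp at h3
  | some e =>
      rw [he, Option.map_some] at h3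
      injection h3 with h3
      cases hf : add (lc y) (lc z) with
      | none => rw [hf] at h4; simp at h4
      | some f =>
          rw [hf, Option.map_some] at h4
          injection h4 with h4
          rw [← h3, ← h4]
          exact pea_rc_antitone hP
            (pea_add_le_add_right hP (pea_lc_antitone hP hxy) hf he)

private lemma odotLmono (hP : IsPEA add lc rc zero one) (x y z a b : E)
    (_ : eaLe add (rc z) x) (hxy : eaLe add x y)
    (h3 : peaOdot add lc rc z x = some a) (h4 : peaOdot add lc rc z y = some b) :
    eaLe add a b := by
  rw [peaOdot] at h3 h4
  cases he : add (lc z) (lc x) with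
  | none => rw [he] at h3; simp at h3
  | some e =>
      rw [he, Option.map_some] at h3
      injection h3 with h3
      cases hf : add (lc z) (lc y) with
      | none => rw [hf] at h4; simp at h4
      | some f =>
          rw [hf, Option.map_some] at h4
          injection h4 with h4
          rw [← h3, ← h4]
          exact pea_rc_antitone hP
            (pea_add_le_add_left hP (pea_lc_antitone hP hxy) hf he)

private lemma impZero (hP : IsPEA add lc rc zero one) (x : E) :
    peaImp add lc x zero = {lc x} := by
  ext w
  constructor
  · rintro ⟨c, hc, hw⟩
    have hc0 : eaLe add c zero := hc zero (Set.mem_insert_of_mem _ rfl)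
    have hcz : c = zero := ea_antisymm hP hc0 (pea_zero_le hP c)
    rw [hcz, pea_add_zero hP] at hw
    injection hw with hw
    rw [Set.mem_singleton_iff]
    exact hw.symm
  · intro hw
    rw [Set.mem_singleton_iff] at hw
    subst hw
    exact ⟨zero, fun u _ => pea_zero_le hP u, pea_add_zero hP (lc x)⟩

private lemma impWZero (hP : IsPEA add lc rc zero one) (x : E) :
    peaImpW add rc x zero = {rc x} := by
  ext w
  constructor
  · rintro ⟨c, hc, hw⟩
    have hc0 : eaLe add c zero := hc zero (Set.mem_insert_of_mem _ rfl)
    have hcz : c = zero := ea_antisymm hP hc0 (pea_zero_le hP c)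
    rw [hcz, pea_zero_add hP] at hw
    injection hw with hw
    rw [Set.mem_singleton_iff]
    exact hw.symm
  · intro hw
    rw [Set.mem_singleton_iff] at hw
    subst hw
    exact ⟨zero, fun u _ => pea_zero_le hP u, pea_zero_add hP (rc x)⟩

private lemma compatL (hP : IsPEA add lc rc zero one) (hG : Good add lc rc) (x y : E) :
    (peaOdot add lc rc (lc x) (lc y)).map rc = (peaOdot add lc rc (rc x) (rc y)).map lc := by
  cases h : add x y with
  | some w =>
      have hx : eaLe add x (lc y) := pea_le_lc_of_def hP h
      have hpre : eaLe add (rc (lc x)) (lc y) := by rw [pea_rc_lc hP]; exact hx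
      have hg := hG (lc x) (lc y) hpre
      rw [pea_rc_lc hP, pea_rc_lc hP, h, Option.map_some] at hg
      simp only [peaOdot, pea_lc_rc hP, h, Option.map_some]
      rw [hg]
      simp only [Option.map_some, pea_rc_lc hP, pea_lc_rc hP]
  | none =>
      have hnone : add (lc (lc x)) (lc (lc y)) = none := by
        cases he : add (lc (lc x)) (lc (lc y)) with
        | none => rfl
        | some e =>
            have h1 := pea_le_rc_of_def hP he
            rw [pea_rc_lc hP] at h1
            have h2 := pea_rc_antitone hP h1
            rw [pea_rc_lc hP, pea_rc_lc hP] at h2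
            obtain ⟨w, hw⟩ := pea_def_of_le_lc hP h2
            rw [h] at hw
            simp at hw
      simp [peaOdot, hnone, pea_lc_rc hP, h]

end Small

/-- Theorem 7 of the paper: a good monotonous pseudoeffect algebra becomes a
divisible unsharp residuated poset via `x ⊙ y := (x̄ + ȳ)˜`, `x → y := x̄ + L(x,y)`
and `x ⇝ y := L(x,y) + x̃`. -/
theorem stmt14 (add : E → E → Option E) (lc rc : E → E) (zero one : E)
    (hP : IsPEA add lc rc zero one) (hG : Good add lc rc)
    (hM : PEAMonotonous add lc rc) :
    IsURP (eaLe add) (peaOdot add lc rc) (peaImp add lc) (peaImpW add rc)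
        lc rc zero one ∧
    (∀ x y, eaLe add x y →
      odotLSet (peaOdot add lc rc) (peaImp add lc y x) y = lcone (eaLe add) {x} ∧
      odotRSet (peaOdot add lc rc) y (peaImpW add rc y x) = lcone (eaLe add) {x}) := by
  constructor
  · exact
      { le_refl := ea_refl hP
        le_antisymm := fun x y h1 h2 => ea_antisymm hP h1 h2
        le_trans := fun x y z h1 h2 => ea_trans hP h1 h2
        zero_le := pea_zero_le hP
        le_one := pea_le_one hP
        rc_lc := pea_rc_lc hP
        lc_rc := pea_lc_rc hP
        lc_antitone := fun x y h => pea_lc_antitone hP h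
        rc_antitone := fun x y h => pea_rc_antitone hP h
        odot_defined := odotDefined hP
        odot_assoc := odotAssoc hP
        odot_one := odotOne hP
        one_odot := oneOdot hP
        odot_rmono := odotRmono hP
        odot_lmono := odotLmono hP
        adjoint_r := adjR hP hG hM
        adjoint_l := adjL hP hG hM
        imp_zero := impZero hP
        impW_zero := impWZero hP
        compat := compatL hP hG }
  · intro x y hxy
    constructor
    · ext v
      constructor
      · rintro ⟨s, ⟨c, hc, hs⟩, hso⟩
        have hps := psi_odot hP hs
        rw [hso] at hps
        injection hps with hps
        intro u hu
        rw [Set.mem_singleton_iff] at hu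
        subst hu
        rw [hps]
        exact hc u (Set.mem_insert_of_mem _ rfl)
      · intro hv
        have hvx : eaLe add v x := hv x rfl
        have hvy : eaLe add v y := ea_trans hP hvx hxy
        obtain ⟨s, hs⟩ : ∃ s, add (lc y) v = some s :=
          pea_def_of_le_rc hP (by rw [pea_rc_lc hP]; exact hvy)
        refine ⟨s, ⟨v, ?_, hs⟩, psi_odot hP hs⟩
        intro u hu
        rcases Set.mem_insert_iff.mp hu with rfl | hu
        · exact hvy
        · rw [Set.mem_singleton_iff] at hu
          subst hu
          exact hvx
    · ext v
      constructor
      · rintro ⟨s, ⟨c, hc, hs⟩, hso⟩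
        have hps := rho_odot hP hs
        rw [hso] at hps
        injection hps with hps
        intro u hu
        rw [Set.mem_singleton_iff] at hu
        subst hu
        rw [hps]
        exact hc u (Set.mem_insert_of_mem _ rfl)
      · intro hv
        have hvx : eaLe add v x := hv x rfl
        have hvy : eaLe add v y := ea_trans hP hvx hxy
        obtain ⟨s, hs⟩ : ∃ s, add v (rc y) = some s :=
          pea_def_of_le_lc hP (by rw [pea_lc_rc hP]; exact hvy)
        refine ⟨s, ⟨v, ?_, hs⟩, rho_odot hP hs⟩
        intro u hu
        rcases Set.mem_insert_iff.mp hu with rfl | hu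
        · exact hvy
        · rw [Set.mem_singleton_iff] at hu
          subst hu
          exact hvx

end Paper
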